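/- Let R₁(x) := ∫_x^∞ e^{-z²/2} dz denote the (unnormalized) Gaussian tail. Then for all x > 0 and 0 < y < x, the map t ↦ R₁(t y)/R₁(t x) is strictly increasing on (0,∞). -/

import Mathlib

open MeasureTheory Set Real

noncomputable def Gt (a : ℝ) : ℝ := ∫ z in Set.Ici a, Real.exp (-z ^ 2 / 2)

lemma gauss_cont : Continuous (fun z : ℝ => Real.exp (-z ^ 2 / 2)) := by
  fun_prop

lemma gauss_int : Integrable (fun z : ℝ => Real.exp (-z ^ 2 / 2)) := by
  have := integrable_exp_neg_mul_sq (b := (1:ℝ)/2) (by norm_num)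
  convert this using 2 with z
  ring_nf

lemma Gt_pos (a : ℝ) : 0 < Gt a := by
  rw [Gt, setIntegral_pos_iff_support_of_nonneg_ae]
  · have : Function.support (fun z : ℝ => Real.exp (-z ^ 2 / 2)) = Set.univ := by
      ext z; simp [Real.exp_ne_zero]
    rw [this, Set.univ_inter]
    simp
  · filter_upwards with z using (Real.exp_pos _).le
  · exact gauss_int.integrableOn

lemma Gt_hasDeriv (a : ℝ) : HasDerivAt Gt (-Real.exp (-a ^ 2 / 2)) a := by
  have hInt := gauss_int
  have hIic : ∀ b : ℝ, (∫ z in Set.Iic b, Real.exp (-z ^ 2 / 2))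
      = (∫ z in Set.Iic 0, Real.exp (-z ^ 2 / 2)) + ∫ z in (0:ℝ)..b, Real.exp (-z ^ 2 / 2) := by
    intro b
    rw [← intervalIntegral.integral_Iic_sub_Iic hInt.integrableOn hInt.integrableOn]
    ring
  have hG : ∀ b : ℝ, Gt b = (∫ z : ℝ, Real.exp (-z ^ 2 / 2))
      - ((∫ z in Set.Iic 0, Real.exp (-z ^ 2 / 2)) + ∫ z in (0:ℝ)..b, Real.exp (-z ^ 2 / 2)) := by
    intro b
    rw [← hIic b, eq_sub_iff_add_eq, Gt, add_comm,
      MeasureTheory.integral_Iic_eq_integral_Iio,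
      intervalIntegral.integral_Iio_add_Ici hInt.integrableOn hInt.integrableOn]
  have hd : HasDerivAt (fun b => ∫ z in (0:ℝ)..b, Real.exp (-z ^ 2 / 2))
      (Real.exp (-a ^ 2 / 2)) a := by
    apply intervalIntegral.integral_hasDerivAt_right hInt.intervalIntegrable
    · exact gauss_cont.stronglyMeasurable.stronglyMeasurableAtFilter
    · exact gauss_cont.continuousAt
  have h2 : HasDerivAt (fun b : ℝ => (∫ z : ℝ, Real.exp (-z ^ 2 / 2))
      - ((∫ z in Set.Iic 0, Real.exp (-z ^ 2 / 2)) + ∫ z in (0:ℝ)..b, Real.exp (-z ^ 2 / 2)))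
      (-Real.exp (-a ^ 2 / 2)) a := by
    simpa using ((hd.const_add (∫ z in Set.Iic 0, Real.exp (-z ^ 2 / 2))).const_sub
      (∫ z : ℝ, Real.exp (-z ^ 2 / 2)))
  exact h2.congr_of_eventuallyEq (Filter.Eventually.of_forall hG)

lemma gauss2_int (a t : ℝ) (ha : 0 < a) :
    Integrable (fun w : ℝ => Real.exp (-((w / a) ^ 2 + (t * a) ^ 2) / 2)) := by
  have := (integrable_exp_neg_mul_sq (b := 1 / (2 * a ^ 2)) (by positivity)).const_mul
    (Real.exp (-(t * a) ^ 2 / 2))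
  convert this using 2 with w
  rw [← Real.exp_add]
  congr 1
  field_simp
  ring

lemma hrw (t a b : ℝ) (ha : 0 < a) :
    a * Real.exp (-(t * a) ^ 2 / 2) * Gt (t * b)
      = ∫ w in Set.Ioi (t * a * b), Real.exp (-((w / a) ^ 2 + (t * a) ^ 2) / 2) := by
  have h2 : ∀ w : ℝ, Real.exp (-((w / a) ^ 2 + (t * a) ^ 2) / 2)
      = Real.exp (-(t * a) ^ 2 / 2) * Real.exp (-(a⁻¹ * w) ^ 2 / 2) := by
    intro w
    rw [← Real.exp_add]
    congr 1
    field_simp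
    ring
  simp_rw [h2]
  rw [MeasureTheory.integral_const_mul]
  have h1 := MeasureTheory.integral_comp_mul_left_Ioi (fun z => Real.exp (-z ^ 2 / 2))
    (t * a * b) (inv_pos.2 ha)
  have hab : a⁻¹ * (t * a * b) = t * b := by field_simp
  rw [hab] at h1
  rw [h1, smul_eq_mul, inv_inv, Gt, MeasureTheory.integral_Ici_eq_integral_Ioi]
  ring

lemma key_ineq (x y t : ℝ) (hy : 0 < y) (hyx : y < x) (ht : 0 < t) :
    y * Real.exp (-(t * y) ^ 2 / 2) * Gt (t * x) <
    x * Real.exp (-(t * x) ^ 2 / 2) * Gt (t * y) := by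
  have hx : 0 < x := hy.trans hyx
  have e1 : y * Real.exp (-(t * y) ^ 2 / 2) * Gt (t * x)
      = ∫ w in Set.Ioi (t * x * y), Real.exp (-((w / y) ^ 2 + (t * y) ^ 2) / 2) := by
    have := hrw t y x hy
    rw [this]
    have : t * y * x = t * x * y := by ring
    rw [this]
  have e2 : x * Real.exp (-(t * x) ^ 2 / 2) * Gt (t * y)
      = ∫ w in Set.Ioi (t * x * y), Real.exp (-((w / x) ^ 2 + (t * x) ^ 2) / 2) :=
    hrw t x y hx
  rw [e1, e2, ← sub_pos, ← MeasureTheory.integral_sub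
    (gauss2_int x t hx).integrableOn (gauss2_int y t hy).integrableOn]
  have hpt : ∀ w ∈ Set.Ioi (t * x * y),
      0 < Real.exp (-((w / x) ^ 2 + (t * x) ^ 2) / 2)
        - Real.exp (-((w / y) ^ 2 + (t * y) ^ 2) / 2) := by
    intro w hw
    rw [Set.mem_Ioi] at hw
    have hw0 : 0 < w := lt_trans (by positivity) hw
    have hsq : t ^ 2 * x ^ 2 * y ^ 2 < w ^ 2 := by
      have h2 := pow_lt_pow_left₀ hw (by positivity : (0:ℝ) ≤ t * x * y) (n := 2) (by norm_num)
      nlinarith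
    have hexp : (w / x) ^ 2 + (t * x) ^ 2 < (w / y) ^ 2 + (t * y) ^ 2 := by
      rw [div_pow, div_pow, div_add' _ _ _ (by positivity), div_add' _ _ _ (by positivity),
        div_lt_div_iff₀ (by positivity) (by positivity)]
      nlinarith [mul_pos (show (0:ℝ) < x ^ 2 - y ^ 2 by nlinarith)
        (show (0:ℝ) < w ^ 2 - t ^ 2 * x ^ 2 * y ^ 2 by nlinarith)]
    have := Real.exp_lt_exp.2 (show -((w / y) ^ 2 + (t * y) ^ 2) / 2
        < -((w / x) ^ 2 + (t * x) ^ 2) / 2 by linarith)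
    linarith
  rw [MeasureTheory.setIntegral_pos_iff_support_of_nonneg_ae]
  · have hsub : Set.Ioi (t * x * y) ⊆ Function.support (fun w =>
        Real.exp (-((w / x) ^ 2 + (t * x) ^ 2) / 2)
          - Real.exp (-((w / y) ^ 2 + (t * y) ^ 2) / 2)) := by
      intro w hw
      exact (hpt w hw).ne'
    rw [Set.inter_eq_right.2 hsub, Real.volume_Ioi]
    exact ENNReal.zero_lt_top
  · refine (MeasureTheory.ae_restrict_iff' measurableSet_Ioi).2 ?_
    filter_upwards with w hw using (hpt w hw).le
  · exact ((gauss2_int x t hx).sub (gauss2_int y t hy)).integrableOn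

theorem stmt9 (x y : ℝ) (hy : 0 < y) (hyx : y < x) :
    StrictMonoOn
      (fun t : ℝ =>
        (∫ z in Set.Ici (t * y), Real.exp (-z ^ 2 / 2)) /
          (∫ z in Set.Ici (t * x), Real.exp (-z ^ 2 / 2)))
      (Set.Ioi 0) := by
  have hx : 0 < x := hy.trans hyx
  have hd : ∀ t : ℝ, 0 < t → HasDerivAt (fun t : ℝ => Gt (t * y) / Gt (t * x))
      ((x * Real.exp (-(t * x) ^ 2 / 2) * Gt (t * y)
        - y * Real.exp (-(t * y) ^ 2 / 2) * Gt (t * x)) / (Gt (t * x)) ^ 2) t := by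
    intro t ht
    have h1 : HasDerivAt (fun t : ℝ => Gt (t * y)) (-Real.exp (-(t * y) ^ 2 / 2) * y) t :=
      by have := (Gt_hasDeriv (t * y)).comp t (hasDerivAt_mul_const (x := t) y); exact this
    have h2 : HasDerivAt (fun t : ℝ => Gt (t * x)) (-Real.exp (-(t * x) ^ 2 / 2) * x) t :=
      by have := (Gt_hasDeriv (t * x)).comp t (hasDerivAt_mul_const (x := t) x); exact this
    have : HasDerivAt (fun t : ℝ => Gt (t * y) / Gt (t * x)) _ t := h1.div h2 (Gt_pos (t * x)).ne'
    convert this using 1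
    ring
  have heq : Set.EqOn (fun t : ℝ =>
      (∫ z in Set.Ici (t * y), Real.exp (-z ^ 2 / 2)) /
        (∫ z in Set.Ici (t * x), Real.exp (-z ^ 2 / 2)))
      (fun t : ℝ => Gt (t * y) / Gt (t * x)) Set.univ := fun t _ => rfl
  have : StrictMonoOn (fun t : ℝ => Gt (t * y) / Gt (t * x)) (Set.Ioi 0) := by
    apply strictMonoOn_of_deriv_pos (convex_Ioi 0)
    · intro t ht
      exact ((hd t ht).continuousAt).continuousWithinAt
    · intro t ht
      rw [interior_Ioi] at ht
      rw [(hd t ht).deriv]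
      apply div_pos
      · linarith [key_ineq x y t hy hyx ht]
      · exact pow_pos (Gt_pos _) 2
  exact this
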